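/- Let ℓ be a prime, G a finite cyclic group of ℓ-power order acting on a finite abelian group M, and C a G-stable subgroup of M. If ℓ does not divide the order of the fixed-point subgroup (M/C)^G, then the ℓ-Sylow subgroup of M equals the ℓ-Sylow subgroup of C. In particular, if ℓ ∤ |M^G| then ℓ ∤ |M|. -/

import Mathlib

open MulAction

/-- The induced `G`-action on the quotient `M ⧸ C` when `C` is `G`-stable. -/
def quotientMulAction {G M : Type*} [Group G] [CommGroup M] [MulDistribMulAction G M]
    (C : Subgroup M) (hC : ∀ (g : G) (x : M), x ∈ C → g • x ∈ C) :
    MulDistribMulAction G (M ⧸ C) where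
  smul g := QuotientGroup.map C C (MulDistribMulAction.toMonoidHom M g)
    (SetLike.le_def.mpr fun x hx => Subgroup.mem_comap.mpr (by
      rw [MulDistribMulAction.toMonoidHom_apply]; exact hC g x hx))
  one_smul q := by
    induction q using QuotientGroup.induction_on with
    | _ x => show QuotientGroup.map _ _ _ _ _ = _
             rw [QuotientGroup.map_mk]
             simp
  mul_smul g h q := by
    induction q using QuotientGroup.induction_on with
    | _ x =>
        show QuotientGroup.map _ _ _ _ _ =
          QuotientGroup.map _ _ _ _ (QuotientGroup.map _ _ _ _ _)
        rw [QuotientGroup.map_mk, QuotientGroup.map_mk, QuotientGroup.map_mk]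
        simp [mul_smul]
  smul_mul g q r := map_mul _ q r
  smul_one g := map_one _

theorem sylow_eq_of_coprime_fixed_quotient (ℓ : ℕ) (hℓ : ℓ.Prime)
    {G M : Type*} [Group G] [IsCyclic G] [Finite G] (e : ℕ) (hG : Nat.card G = ℓ ^ e)
    [CommGroup M] [Finite M] [MulDistribMulAction G M]
    (C : Subgroup M) (hC : ∀ (g : G) (x : M), x ∈ C → g • x ∈ C)
    (h : ¬ ℓ ∣ Nat.card {q : M ⧸ C // ∀ (g : G) (x : M),
        (QuotientGroup.mk x : M ⧸ C) = q → (QuotientGroup.mk (g • x) : M ⧸ C) = q}) :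
    ∀ x : M, (∃ k : ℕ, x ^ ℓ ^ k = 1) → x ∈ C := by
  haveI : Fact ℓ.Prime := ⟨hℓ⟩
  letI := quotientMulAction C hC
  have smul_mk : ∀ (g : G) (y : M),
      g • (QuotientGroup.mk y : M ⧸ C) = QuotientGroup.mk (g • y) := by
    intro g y
    show QuotientGroup.map _ _ _ _ _ = _
    rw [QuotientGroup.map_mk]
    rfl
  rintro x ⟨k, hxk⟩
  by_contra hx
  set q : M ⧸ C := QuotientGroup.mk x with hq
  have hq1 : q ≠ 1 := by
    simpa [hq, QuotientGroup.eq_one_iff] using hx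
  have hqk : q ^ ℓ ^ k = 1 := by
    rw [hq, ← QuotientGroup.mk_pow, hxk, QuotientGroup.mk_one]
  -- the subgroup of elements killed by ℓ ^ k
  set S : Subgroup (M ⧸ C) :=
    { carrier := {y | y ^ ℓ ^ k = 1}
      one_mem' := one_pow _
      mul_mem' := by
        intro a b ha hb
        simp only [Set.mem_setOf_eq] at *
        rw [mul_pow, ha, hb, one_mul]
      inv_mem' := by
        intro a ha
        simp only [Set.mem_setOf_eq] at *
        rw [inv_pow, ha, inv_one] } with hS
  have memS : ∀ y : M ⧸ C, y ∈ S ↔ y ^ ℓ ^ k = 1 := fun y => Iff.rfl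
  letI : MulAction G ↥S :=
    { smul := fun g y => ⟨g • (y : M ⧸ C), by
        have hy : ((y : M ⧸ C)) ^ ℓ ^ k = 1 := y.2
        show (g • (y : M ⧸ C)) ^ ℓ ^ k = 1
        rw [← MulDistribMulAction.toMonoidHom_apply, ← map_pow, hy, map_one]⟩
      one_smul := fun y => Subtype.ext (one_smul G (y : M ⧸ C))
      mul_smul := fun g g' y => Subtype.ext (mul_smul g g' (y : M ⧸ C)) }
  have smulS : ∀ (g : G) (y : ↥S), ((g • y : ↥S) : M ⧸ C) = g • (y : M ⧸ C) :=
    fun g y => rfl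
  have hGp : IsPGroup ℓ G := IsPGroup.of_card hG
  have hSp : IsPGroup ℓ ↥S := fun y => ⟨k, Subtype.ext (by
    push_cast
    exact y.2)⟩
  have hnt : Nontrivial ↥S := ⟨⟨⟨q, hqk⟩, 1, fun he => hq1 (Subtype.ext_iff.mp he)⟩⟩
  have hdvdS : ℓ ∣ Nat.card ↥S := by
    obtain ⟨n, hn0, hn⟩ := hSp.nontrivial_iff_card.mp hnt
    exact hn ▸ dvd_pow_self ℓ hn0.ne'
  have hdvdFix : ℓ ∣ Nat.card (fixedPoints G ↥S) :=
    Nat.modEq_zero_iff_dvd.mp ((hGp.card_modEq_card_fixedPoints ↥S).symm.trans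
      (Nat.modEq_zero_iff_dvd.mpr hdvdS))
  -- the subgroup of fixed points of M ⧸ C
  set F : Subgroup (M ⧸ C) :=
    { carrier := fixedPoints G (M ⧸ C)
      one_mem' := fun g => smul_one g
      mul_mem' := by
        intro a b ha hb g
        rw [smul_mul', ha g, hb g]
      inv_mem' := by
        intro a ha g
        rw [smul_inv', ha g] } with hF
  have memF : ∀ y : M ⧸ C, y ∈ F ↔ ∀ g : G, g • y = y := fun y => Iff.rfl
  have cardEq : Nat.card (fixedPoints G ↥S) = Nat.card (S.subgroupOf F) :=
    Nat.card_congr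
      { toFun := fun z => ⟨⟨(z.1 : M ⧸ C), fun g => congrArg Subtype.val (z.2 g)⟩,
          Subgroup.mem_subgroupOf.mpr z.1.2⟩
        invFun := fun w => ⟨⟨(w.1 : M ⧸ C), Subgroup.mem_subgroupOf.mp w.2⟩,
          fun g => Subtype.ext (w.1.2 g)⟩
        left_inv := fun z => Subtype.ext (Subtype.ext rfl)
        right_inv := fun w => Subtype.ext (Subtype.ext rfl) }
  have hdvdF : ℓ ∣ Nat.card F := by
    refine dvd_trans ?_ (Subgroup.card_subgroup_dvd_card (S.subgroupOf F))
    rw [← cardEq]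
    exact hdvdFix
  apply h
  have cardA : Nat.card {q : M ⧸ C // ∀ (g : G) (x : M),
      (QuotientGroup.mk x : M ⧸ C) = q → (QuotientGroup.mk (g • x) : M ⧸ C) = q} =
      Nat.card F := by
    apply Nat.card_congr
    apply Equiv.subtypeEquivRight
    intro y
    rw [memF]
    constructor
    · intro hy g
      obtain ⟨z, hz⟩ := QuotientGroup.mk_surjective y
      rw [← hz, smul_mk]
      exact (hy g z hz).trans hz.symm
    · intro hy g z hz
      rw [← hz, ← smul_mk, hz]
      exact hy g
  rw [cardA]
  exact hdvdF
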